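/- The function h(λ') = 1 + 2/λ' − √(2/λ') (the σ'→∞ limit of the limiting mismatched MSE formula for σ = 1, λ = 2) is strictly decreasing on (0,8), strictly increasing on (8,∞), and attains its minimum value 3/4 at λ' = 8; moreover 3/4 = MMSE∞(1,2), the limiting Bayes-optimal MMSE at σ = 1, λ = 2. -/
import Mathlib


open MeasureTheory ProbabilityTheory Filter Matrix

noncomputable section

/-- The limiting MMSE formula. -/
def MMSElim (sig lam : ℝ) : ℝ :=
  if lam ≤ 1 / sig ^ 4 then sig ^ 4 else 2 / lam - 1 / (lam ^ 2 * sig ^ 4)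

lemma h_eq_aux (l : ℝ) (hl : 0 < l) :
    1 + 2 / l - Real.sqrt (2 / l) = (Real.sqrt (2 / l) - 1 / 2) ^ 2 + 3 / 4 := by
  have hs : Real.sqrt (2 / l) ^ 2 = 2 / l := Real.sq_sqrt (by positivity)
  nlinarith [hs]

lemma sqrt_gt_half {l : ℝ} (h0 : 0 < l) (h8 : l < 8) : 1 / 2 < Real.sqrt (2 / l) := by
  have : (1 / 2 : ℝ) ^ 2 < 2 / l := by
    rw [show ((1:ℝ)/2)^2 = 1/4 by norm_num, div_lt_div_iff₀ (by norm_num) h0]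
    linarith
  calc (1 / 2 : ℝ) = Real.sqrt ((1 / 2) ^ 2) := by
        rw [Real.sqrt_sq (by norm_num)]
    _ < Real.sqrt (2 / l) := Real.sqrt_lt_sqrt (by positivity) this

lemma sqrt_lt_half {l : ℝ} (h8 : 8 < l) : Real.sqrt (2 / l) < 1 / 2 := by
  have h0 : (0 : ℝ) < l := by linarith
  have : 2 / l < (1 / 2 : ℝ) ^ 2 := by
    rw [div_lt_iff₀ h0]
    nlinarith
  calc Real.sqrt (2 / l) < Real.sqrt ((1 / 2) ^ 2) := Real.sqrt_lt_sqrt (by positivity) this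
    _ = 1 / 2 := Real.sqrt_sq (by norm_num)

lemma sqrt_anti {a b : ℝ} (ha : 0 < a) (hab : a < b) :
    Real.sqrt (2 / b) < Real.sqrt (2 / a) := by
  have hb : 0 < b := ha.trans hab
  apply Real.sqrt_lt_sqrt (by positivity)
  apply div_lt_div_of_pos_left (by norm_num) ha hab

/-- The function `h(λ') = 1 + 2/λ' − √(2/λ')` is strictly
decreasing on `(0,8)`, strictly increasing on `(8,∞)`, attains its minimum `3/4`
at `λ' = 8`, and `3/4 = MMSE∞(1,2)`. -/
theorem limit_curve_min_at_eight :
    StrictAntiOn (fun l' : ℝ => 1 + 2 / l' - Real.sqrt (2 / l')) (Set.Ioo 0 8) ∧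
      StrictMonoOn (fun l' : ℝ => 1 + 2 / l' - Real.sqrt (2 / l')) (Set.Ioi 8) ∧
      (1 + 2 / (8 : ℝ) - Real.sqrt (2 / 8) = 3 / 4) ∧
      (∀ l' : ℝ, 0 < l' → (3 : ℝ) / 4 ≤ 1 + 2 / l' - Real.sqrt (2 / l')) ∧
      MMSElim 1 2 = 3 / 4 := by
  refine ⟨?_, ?_, ?_, ?_, ?_⟩
  · intro a ha b hb hab
    simp only
    rw [h_eq_aux a ha.1, h_eq_aux b hb.1]
    have h1 := sqrt_gt_half hb.1 hb.2
    have h2 := sqrt_anti ha.1 hab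
    nlinarith [h1, h2]
  · intro a ha b hb hab
    simp only
    have ha8 : (8 : ℝ) < a := ha
    have hb8 : (8 : ℝ) < b := hb
    rw [h_eq_aux a (by linarith), h_eq_aux b (by linarith)]
    have h1 := sqrt_lt_half ha8
    have h2 := sqrt_anti (by linarith : (0:ℝ) < a) hab
    have h3 : 0 ≤ Real.sqrt (2 / b) := Real.sqrt_nonneg _
    nlinarith [h1, h2, h3]
  · rw [show (2 : ℝ) / 8 = (1 / 2) ^ 2 by norm_num, Real.sqrt_sq (by norm_num)]
    norm_num
  · intro l hl
    rw [h_eq_aux l hl]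
    nlinarith [sq_nonneg (Real.sqrt (2 / l) - 1 / 2)]
  · norm_num [MMSElim]
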